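/- Let λ ≥ 0, set γ = 2√(4+λ) and δ₊ = 2 + √(4+λ), and let δ ∈ (0, γ) and ε ∈ (0, γ). Let u : [0,∞) → ℝ be twice continuously differentiable, define f(r) = −u″(r) − 4u′(r) + λ·u(r), and assume ∫₀^∞ u(r)² e^{2(δ₊−ε)r} dr < ∞ and ∫₀^∞ f(r)² e^{2(δ₊+δ)r} dr < ∞. Then there exists u_∞ ∈ ℝ such that e^{δ₊r} u(r) → u_∞ as r → ∞, and for every δ′ ∈ (0, δ) one has ∫₀^∞ ( u(r) − u_∞ e^{−δ₊r} )² e^{2(δ₊+δ′)r} dr < ∞. -/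

import Mathlib

open MeasureTheory Filter Set Real
open Topology

private lemma exp_sq' (x : ℝ) : Real.exp x ^ 2 = Real.exp (2*x) := by
  rw [pow_two, ← Real.exp_add]; ring_nf

private lemma aux_amgm (A B : ℝ) {α : ℝ} (hα : 0 < α) :
    A * B ≤ α / 2 * A ^ 2 + 1 / (2 * α) * B ^ 2 := by
  have h3 : (0:ℝ) ≤ (α * A - B) ^ 2 / (2 * α) := div_nonneg (sq_nonneg _) (by linarith)
  have key : α / 2 * A ^ 2 + 1 / (2 * α) * B ^ 2 - A * B = (α * A - B) ^ 2 / (2 * α) := by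
    field_simp
    ring
  linarith

private lemma aux_integral_exp_Ioi {c : ℝ} (hc : 0 < c) (r : ℝ) :
    ∫ s in Set.Ioi r, Real.exp (-c * s) = Real.exp (-c * r) / c := by
  have hderiv : ∀ x ∈ Set.Ici r, HasDerivAt (fun s => -Real.exp (-c * s) / c)
      (Real.exp (-c * x)) x := by
    intro x _
    have h1 : HasDerivAt (fun s : ℝ => -c * s) (-c) x := by
      simpa using (hasDerivAt_id x).const_mul (-c)
    have h2 := (h1.exp).neg.div_const c
    refine h2.congr_deriv (Eq.symm ?_)
    field_simp
  have htend : Tendsto (fun s => -Real.exp (-c * s) / c) atTop (𝓝 0) := by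
    have h0 : Tendsto (fun s : ℝ => -c * s) atTop atBot :=
      tendsto_id.const_mul_atTop_of_neg (by linarith)
    have := (Real.tendsto_exp_atBot.comp h0).neg.div_const c
    simpa [Function.comp] using this
  have := integral_Ioi_of_hasDerivAt_of_tendsto' hderiv
    (exp_neg_integrableOn_Ioi r hc) htend
  rw [this]; ring


/-- Scalar ODE lemma underlying the paper's regularity Theorem 2.6: let `λ ≥ 0`,
`δ₊ = 2 + √(4+λ)`, `γ = 2√(4+λ)`, and `δ, ε ∈ (0, γ)`. If `u` is `C²` on `[0,∞)` with
`u ∈ L²` for the weight `e^{2(δ₊−ε)r}` and `f = −u″ − 4u′ + λu ∈ L²` for the weight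
`e^{2(δ₊+δ)r}`, then `e^{δ₊ r} u(r)` converges to some `u_∞`, and for every `δ′ < δ` the
difference `u − u_∞ e^{−δ₊ r}` is `L²` for the weight `e^{2(δ₊+δ′)r}`. -/
theorem indicial_boundary_value (lam : ℝ) (hlam : 0 ≤ lam) (δ ε : ℝ)
    (hδ : δ ∈ Set.Ioo (0 : ℝ) (2 * Real.sqrt (4 + lam)))
    (hε : ε ∈ Set.Ioo (0 : ℝ) (2 * Real.sqrt (4 + lam)))
    (u u' u'' : ℝ → ℝ)
    (hu' : ∀ r ∈ Set.Ici (0 : ℝ), HasDerivAt u (u' r) r)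
    (hu'' : ∀ r ∈ Set.Ici (0 : ℝ), HasDerivAt u' (u'' r) r)
    (hcont : ContinuousOn u'' (Set.Ici (0 : ℝ)))
    (huL2 : IntegrableOn
      (fun r => u r ^ 2 * Real.exp (2 * ((2 + Real.sqrt (4 + lam)) - ε) * r))
      (Set.Ioi (0 : ℝ)))
    (hfL2 : IntegrableOn
      (fun r => (-u'' r - 4 * u' r + lam * u r) ^ 2 *
        Real.exp (2 * ((2 + Real.sqrt (4 + lam)) + δ) * r))
      (Set.Ioi (0 : ℝ))) :
    ∃ uinf : ℝ,
      Tendsto (fun r => Real.exp ((2 + Real.sqrt (4 + lam)) * r) * u r) atTop (nhds uinf) ∧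
      ∀ δ' ∈ Set.Ioo (0 : ℝ) δ,
        IntegrableOn
          (fun r => (u r - uinf * Real.exp (-(2 + Real.sqrt (4 + lam)) * r)) ^ 2 *
            Real.exp (2 * ((2 + Real.sqrt (4 + lam)) + δ') * r))
          (Set.Ioi (0 : ℝ)) := by
  obtain ⟨hδ0, hδγ⟩ := hδ
  obtain ⟨hε0, hεγ⟩ := hε
  have h4 : (0:ℝ) < 4 + lam := by linarith
  set μ := Real.sqrt (4 + lam) with hμdef
  have hμ0 : 0 < μ := Real.sqrt_pos.2 h4
  have hμsq : μ * μ = 4 + lam := Real.mul_self_sqrt h4.le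
  -- continuity facts
  have hu_cont : ContinuousOn u (Set.Ici 0) :=
    fun r hr => (hu' r hr).continuousAt.continuousWithinAt
  have hu'_cont : ContinuousOn u' (Set.Ici 0) :=
    fun r hr => (hu'' r hr).continuousAt.continuousWithinAt
  have hf_cont : ContinuousOn (fun r => -u'' r - 4 * u' r + lam * u r) (Set.Ici 0) :=
    (hcont.neg.sub (continuousOn_const.mul hu'_cont)).add (continuousOn_const.mul hu_cont)
  have hexp_cont : ∀ c : ℝ, Continuous fun s : ℝ => Real.exp (c * s) := fun c =>
    Real.continuous_exp.comp (continuous_const.mul continuous_id)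
  have hw_cont : ContinuousOn (fun r => Real.exp ((2+μ)*r) * (u' r + (2+μ) * u r)) (Set.Ici 0) :=
    (hexp_cont _).continuousOn.mul (hu'_cont.add (continuousOn_const.mul hu_cont))
  -- derivatives
  have hDexp : ∀ (c r : ℝ), HasDerivAt (fun y : ℝ => Real.exp (c*y)) (Real.exp (c*r) * c) r := by
    intro c r
    simpa using ((hasDerivAt_id r).const_mul c).exp
  have hv' : ∀ r ∈ Set.Ici (0:ℝ), HasDerivAt (fun y => Real.exp ((2+μ)*y) * u y)
      (Real.exp ((2+μ)*r) * (u' r + (2+μ) * u r)) r := by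
    intro r hr
    have := (hDexp (2+μ) r).mul (hu' r hr)
    refine this.congr_deriv (Eq.symm ?_)
    ring
  have hw' : ∀ r ∈ Set.Ici (0:ℝ),
      HasDerivAt (fun y => Real.exp ((2+μ)*y) * (u' y + (2+μ) * u y))
      (Real.exp ((2+μ)*r) * (u'' r + 2*(2+μ)*u' r + (2+μ)*(2+μ)*u r)) r := by
    intro r hr
    have := (hDexp (2+μ) r).mul ((hu'' r hr).add ((hu' r hr).const_mul (2+μ)))
    refine this.congr_deriv (Eq.symm ?_)
    simp only [Pi.add_apply]
    ring
  have hh' : ∀ r ∈ Set.Ici (0:ℝ),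
      HasDerivAt (fun y => Real.exp (-(2*μ)*y) * (Real.exp ((2+μ)*y) * (u' y + (2+μ) * u y)))
      (-(Real.exp ((2-μ)*r) * (-u'' r - 4 * u' r + lam * u r))) r := by
    intro r hr
    have hE : Real.exp (-(2*μ)*r) * Real.exp ((2+μ)*r) = Real.exp ((2-μ)*r) := by
      rw [← Real.exp_add]; congr 1; ring
    have := (hDexp (-(2*μ)) r).mul (hw' r hr)
    refine this.congr_deriv (Eq.symm ?_)
    linear_combination ((Real.exp (-(2*μ)*r) * Real.exp ((2+μ)*r)) * u r) * hμsq +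
      ((-u'' r - 4*u' r + lam*u r)) * hE
  -- pointwise AM-GM bound for G
  have hGpt : ∀ (s α : ℝ), 0 < α →
      ‖Real.exp ((2-μ)*s) * (-u'' s - 4 * u' s + lam * u s)‖ ≤
        α/2 * ((-u'' s - 4 * u' s + lam * u s)^2 * Real.exp (2 * ((2+μ) + δ) * s))
        + 1/(2*α) * Real.exp (-(2*(2*μ+δ)) * s) := by
    intro s α hα
    have hAB : ‖Real.exp ((2-μ)*s) * (-u'' s - 4 * u' s + lam * u s)‖ =
        (|(-u'' s - 4 * u' s + lam * u s)| * Real.exp (((2+μ)+δ)*s)) *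
          Real.exp (-(2*μ+δ)*s) := by
      rw [Real.norm_eq_abs, abs_mul, Real.abs_exp, mul_right_comm, mul_assoc, ← Real.exp_add]
      rw [mul_comm]
      congr 2
      ring
    rw [hAB]
    have key := aux_amgm (|(-u'' s - 4 * u' s + lam * u s)| * Real.exp (((2+μ)+δ)*s))
      (Real.exp (-(2*μ+δ)*s)) hα
    rw [mul_pow, sq_abs, exp_sq', exp_sq'] at key
    calc _ ≤ α/2 * ((-u'' s - 4 * u' s + lam * u s)^2 * Real.exp (2*(((2+μ)+δ)*s)))
        + 1/(2*α) * Real.exp (2 * (-(2*μ+δ)*s)) := key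
    _ = _ := by rw [← mul_assoc 2 ((2+μ)+δ) s]; congr 2; · congr 1; ring
  have hc0 : (0:ℝ) < 2*μ+δ := by linarith
  have hG_int : IntegrableOn
      (fun s => Real.exp ((2-μ)*s) * (-u'' s - 4 * u' s + lam * u s)) (Set.Ioi 0) := by
    have hb_int : IntegrableOn (fun s =>
        (1:ℝ)/2 * ((-u'' s - 4 * u' s + lam * u s)^2 * Real.exp (2 * ((2+μ) + δ) * s))
        + 1/(2*1) * Real.exp (-(2*(2*μ+δ)) * s)) (Set.Ioi 0) :=
      (hfL2.const_mul _).add ((exp_neg_integrableOn_Ioi 0 (by linarith)).const_mul _)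
    refine hb_int.mono' (((((hexp_cont (2-μ)).continuousOn.mul hf_cont)).mono
      Ioi_subset_Ici_self).aestronglyMeasurable measurableSet_Ioi) (ae_of_all _ fun s => ?_)
    exact hGpt s 1 one_pos
  set M := ∫ s in Set.Ioi (0:ℝ),
      (-u'' s - 4 * u' s + lam * u s)^2 * Real.exp (2 * ((2+μ) + δ) * s) with hMdef
  have hM0 : 0 ≤ M := setIntegral_nonneg measurableSet_Ioi (fun x _ => by positivity)
  set K := M/2 + 1/(4*(2*μ+δ)) with hKdef
  have hK0 : 0 < K := by
    have : 0 < 1/(4*(2*μ+δ)) := by positivity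
    simp only [hKdef]; linarith
  -- tail bound
  have htail : ∀ r : ℝ, 0 ≤ r →
      |∫ s in Set.Ioi r, Real.exp ((2-μ)*s) * (-u'' s - 4 * u' s + lam * u s)| ≤
        K * Real.exp (-(2*μ+δ)*r) := by
    intro r hr
    have hαpos : (0:ℝ) < Real.exp (-(2*μ+δ)*r) := Real.exp_pos _
    have hfint_r : IntegrableOn
        (fun s => (-u'' s - 4 * u' s + lam * u s)^2 * Real.exp (2 * ((2+μ) + δ) * s))
        (Set.Ioi r) := hfL2.mono_set (Ioi_subset_Ioi hr)
    have hexp_int_r : IntegrableOn (fun s => Real.exp (-(2*(2*μ+δ))*s)) (Set.Ioi r) :=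
      exp_neg_integrableOn_Ioi r (by linarith)
    have step1 := norm_integral_le_integral_norm (μ := volume.restrict (Set.Ioi r))
      (fun s => Real.exp ((2-μ)*s) * (-u'' s - 4 * u' s + lam * u s))
    have step2 : (∫ s in Set.Ioi r,
          ‖Real.exp ((2-μ)*s) * (-u'' s - 4 * u' s + lam * u s)‖) ≤
        ∫ s in Set.Ioi r, (Real.exp (-(2*μ+δ)*r)/2 *
            ((-u'' s - 4 * u' s + lam * u s)^2 * Real.exp (2 * ((2+μ) + δ) * s))
          + 1/(2*Real.exp (-(2*μ+δ)*r)) * Real.exp (-(2*(2*μ+δ))*s)) := by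
      refine integral_mono_of_nonneg (ae_of_all _ fun s => norm_nonneg _)
        ((hfint_r.const_mul _).add (hexp_int_r.const_mul _)) (ae_of_all _ fun s => ?_)
      exact hGpt s _ hαpos
    have step3 : (∫ s in Set.Ioi r, (Real.exp (-(2*μ+δ)*r)/2 *
            ((-u'' s - 4 * u' s + lam * u s)^2 * Real.exp (2 * ((2+μ) + δ) * s))
          + 1/(2*Real.exp (-(2*μ+δ)*r)) * Real.exp (-(2*(2*μ+δ))*s))) =
        Real.exp (-(2*μ+δ)*r)/2 * (∫ s in Set.Ioi r,
            (-u'' s - 4 * u' s + lam * u s)^2 * Real.exp (2 * ((2+μ) + δ) * s))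
          + 1/(2*Real.exp (-(2*μ+δ)*r)) * ∫ s in Set.Ioi r, Real.exp (-(2*(2*μ+δ))*s) := by
      rw [integral_add (hfint_r.const_mul _) (hexp_int_r.const_mul _),
        integral_const_mul, integral_const_mul]
    have hMle : (∫ s in Set.Ioi r,
          (-u'' s - 4 * u' s + lam * u s)^2 * Real.exp (2 * ((2+μ) + δ) * s)) ≤ M :=
      setIntegral_mono_set hfL2 (ae_of_all _ fun x => by positivity)
        ((Ioi_subset_Ioi hr).eventuallyLE)
    have hexp_val : (∫ s in Set.Ioi r, Real.exp (-(2*(2*μ+δ))*s)) =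
        Real.exp (-(2*(2*μ+δ))*r)/(2*(2*μ+δ)) := aux_integral_exp_Ioi (by linarith) r
    have hEE : Real.exp (-(2*(2*μ+δ))*r) = Real.exp (-(2*μ+δ)*r) * Real.exp (-(2*μ+δ)*r) := by
      rw [← Real.exp_add]; congr 1; ring
    calc |∫ s in Set.Ioi r, Real.exp ((2-μ)*s) * (-u'' s - 4 * u' s + lam * u s)|
        ≤ ∫ s in Set.Ioi r, ‖Real.exp ((2-μ)*s) * (-u'' s - 4 * u' s + lam * u s)‖ := step1
      _ ≤ _ := step2
      _ = _ := step3
      _ ≤ Real.exp (-(2*μ+δ)*r)/2 * M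
          + 1/(2*Real.exp (-(2*μ+δ)*r)) * (Real.exp (-(2*(2*μ+δ))*r)/(2*(2*μ+δ))) := by
          rw [hexp_val]
          exact add_le_add_left (mul_le_mul_of_nonneg_left hMle (by positivity)) _
      _ = K * Real.exp (-(2*μ+δ)*r) := by
          rw [hEE, hKdef]; field_simp; ring
  -- limit of the integrating factor
  set C := limUnder atTop
      (fun y => Real.exp (-(2*μ)*y) * (Real.exp ((2+μ)*y) * (u' y + (2+μ) * u y))) with hCdef
  have hh_tendsto : Tendsto
      (fun y => Real.exp (-(2*μ)*y) * (Real.exp ((2+μ)*y) * (u' y + (2+μ) * u y)))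
      atTop (𝓝 C) :=
    tendsto_limUnder_of_hasDerivAt_of_integrableOn_Ioi
      (fun x (hx : x ∈ Set.Ioi (0:ℝ)) => hh' x (Set.mem_Ici.2 (le_of_lt (Set.mem_Ioi.1 hx)))) hG_int.neg
  have hrep : ∀ r : ℝ, 0 ≤ r →
      Real.exp (-(2*μ)*r) * (Real.exp ((2+μ)*r) * (u' r + (2+μ) * u r)) =
        C + ∫ s in Set.Ioi r, Real.exp ((2-μ)*s) * (-u'' s - 4 * u' s + lam * u s) := by
    intro r hr
    have hI := integral_Ioi_of_hasDerivAt_of_tendsto'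
      (fun x hx => hh' x (le_trans hr hx))
      ((hG_int.mono_set (Ioi_subset_Ioi hr)).neg) hh_tendsto
    rw [integral_neg] at hI
    linarith [hI]
  -- bound on q x = w x - C e^{2μ x}
  have hq_bound : ∀ x : ℝ, 0 ≤ x →
      |Real.exp ((2+μ)*x) * (u' x + (2+μ) * u x) - C * Real.exp ((2*μ)*x)| ≤
        K * Real.exp (-δ*x) := by
    intro x hx
    have h1 := hrep x hx
    have h2 := htail x hx
    have hne : Real.exp (-(2*μ)*x) * Real.exp ((2*μ)*x) = 1 := by
      rw [← Real.exp_add]; norm_num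
    have h3 : Real.exp ((2+μ)*x) * (u' x + (2+μ) * u x) - C * Real.exp ((2*μ)*x) =
        Real.exp ((2*μ)*x) *
          (∫ s in Set.Ioi x, Real.exp ((2-μ)*s) * (-u'' s - 4 * u' s + lam * u s)) := by
      linear_combination Real.exp ((2*μ)*x) * h1 -
        (Real.exp ((2+μ)*x) * (u' x + (2+μ) * u x)) * hne
    rw [h3, abs_mul, Real.abs_exp]
    have hEE : Real.exp ((2*μ)*x) * Real.exp (-(2*μ+δ)*x) = Real.exp (-δ*x) := by
      rw [← Real.exp_add]; congr 1; ring
    calc Real.exp ((2*μ)*x) * |∫ s in Set.Ioi x,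
          Real.exp ((2-μ)*s) * (-u'' s - 4 * u' s + lam * u s)|
        ≤ Real.exp ((2*μ)*x) * (K * Real.exp (-(2*μ+δ)*x)) :=
          mul_le_mul_of_nonneg_left h2 (Real.exp_pos _).le
      _ = K * Real.exp (-δ*x) := by linear_combination K * hEE
  have hq_int : IntegrableOn
      (fun x => Real.exp ((2+μ)*x) * (u' x + (2+μ) * u x) - C * Real.exp ((2*μ)*x))
      (Set.Ioi 0) := by
    refine ((exp_neg_integrableOn_Ioi 0 hδ0).const_mul K).mono'
      (((hw_cont.sub ((continuous_const.mul (hexp_cont (2*μ))).continuousOn)).mono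
        Ioi_subset_Ici_self).aestronglyMeasurable measurableSet_Ioi) ?_
    rw [ae_restrict_iff' measurableSet_Ioi]
    refine ae_of_all _ fun x hx => ?_
    have := hq_bound x (le_of_lt hx)
    simpa [Real.norm_eq_abs, neg_mul] using this
  -- derivative of vtil
  have hvtil' : ∀ x ∈ Set.Ici (0:ℝ), HasDerivAt
      (fun y => Real.exp ((2+μ)*y) * u y - C/(2*μ) * Real.exp ((2*μ)*y))
      (Real.exp ((2+μ)*x) * (u' x + (2+μ) * u x) - C * Real.exp ((2*μ)*x)) x := by
    intro x hx
    have := (hv' x hx).sub ((hDexp (2*μ) x).const_mul (C/(2*μ)))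
    refine this.congr_deriv (Eq.symm ?_)
    field_simp
  set L := limUnder atTop
      (fun y => Real.exp ((2+μ)*y) * u y - C/(2*μ) * Real.exp ((2*μ)*y)) with hLdef
  have hvtil_tendsto : Tendsto
      (fun y => Real.exp ((2+μ)*y) * u y - C/(2*μ) * Real.exp ((2*μ)*y)) atTop (𝓝 L) :=
    tendsto_limUnder_of_hasDerivAt_of_integrableOn_Ioi
      (fun x (hx : x ∈ Set.Ioi (0:ℝ)) => hvtil' x (Set.mem_Ici.2 (le_of_lt (Set.mem_Ioi.1 hx)))) hq_int
  have hC0 : C = 0 := by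
    by_contra hC
    have hCpos : 0 < |C| := abs_pos.2 hC
    have h1 : Tendsto (fun r : ℝ => (2*μ-ε)*r) atTop atTop :=
      tendsto_id.const_mul_atTop (by linarith)
    have h2 : Tendsto (fun r : ℝ => |C|/(2*μ) * Real.exp ((2*μ-ε)*r)) atTop atTop :=
      (tendsto_exp_atTop.comp h1).const_mul_atTop (by positivity)
    have h2' : Tendsto (fun r : ℝ => |C|/(2*μ) * Real.exp ((2*μ-ε)*r) - 1) atTop atTop := by
      simpa [sub_eq_add_neg] using tendsto_atTop_add_const_right atTop (-1 : ℝ) h2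
    have h3 : Tendsto (fun r : ℝ => Real.exp (ε*r) * (|C|/(2*μ)*Real.exp ((2*μ-ε)*r) - 1))
        atTop atTop :=
      (tendsto_exp_atTop.comp (tendsto_id.const_mul_atTop hε0)).atTop_mul_atTop₀ h2'
    have h4 : Tendsto (fun r : ℝ => |C|/(2*μ)*Real.exp ((2*μ)*r) - Real.exp (ε*r))
        atTop atTop := by
      refine h3.congr fun r => ?_
      have hEE : Real.exp (ε*r) * Real.exp ((2*μ-ε)*r) = Real.exp ((2*μ)*r) := by
        rw [← Real.exp_add]; congr 1; ring
      linear_combination (|C|/(2*μ)) * hEE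
    have hEv1 : ∀ᶠ r in atTop, |L| + 1 ≤ |C|/(2*μ)*Real.exp ((2*μ)*r) - Real.exp (ε*r) :=
      h4.eventually_ge_atTop _
    have hEv2 : ∀ᶠ r in atTop,
        |Real.exp ((2+μ)*r) * u r - C/(2*μ) * Real.exp ((2*μ)*r)| ≤ |L| + 1 :=
      hvtil_tendsto.abs.eventually (eventually_le_nhds (by linarith))
    obtain ⟨R, hR⟩ := eventually_atTop.mp ((hEv1.and hEv2).and (eventually_ge_atTop (0:ℝ)))
    have hR0 : 0 ≤ R := (hR R le_rfl).2
    have hone : IntegrableOn (fun _ : ℝ => (1:ℝ)) (Set.Ioi R) := by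
      refine (huL2.mono_set (Ioi_subset_Ioi hR0)).mono' aestronglyMeasurable_const ?_
      rw [ae_restrict_iff' measurableSet_Ioi]
      refine ae_of_all _ fun x hx => ?_
      obtain ⟨⟨hx1, hx2⟩, hx0⟩ := hR x (le_of_lt hx)
      have habs2 : |C/(2*μ) * Real.exp ((2*μ)*x)| = |C|/(2*μ) * Real.exp ((2*μ)*x) := by
        rw [abs_mul, abs_div, Real.abs_exp, abs_of_pos (by linarith : (0:ℝ) < 2*μ)]
      have hsub : |C/(2*μ) * Real.exp ((2*μ)*x)| ≤ |Real.exp ((2+μ)*x) * u x| +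
          |Real.exp ((2+μ)*x) * u x - C/(2*μ)*Real.exp ((2*μ)*x)| := by
        have h := abs_sub (Real.exp ((2+μ)*x) * u x)
          (Real.exp ((2+μ)*x) * u x - C/(2*μ)*Real.exp ((2*μ)*x))
        calc |C/(2*μ) * Real.exp ((2*μ)*x)|
            = |Real.exp ((2+μ)*x) * u x -
              (Real.exp ((2+μ)*x) * u x - C/(2*μ)*Real.exp ((2*μ)*x))| := by congr 1; ring
          _ ≤ _ := h
      have hvlow : Real.exp (ε*x) ≤ |Real.exp ((2+μ)*x) * u x| := by
        rw [habs2] at hsub; linarith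
      have hp2 : Real.exp (ε*x)^2 ≤ (Real.exp ((2+μ)*x) * u x)^2 := by
        rw [← sq_abs (Real.exp ((2+μ)*x) * u x)]
        exact pow_le_pow_left₀ (Real.exp_pos _).le hvlow 2
      have hw1 : (Real.exp ((2+μ)*x))^2 * Real.exp (-(2*ε)*x) = Real.exp (2*((2+μ)-ε)*x) := by
        rw [exp_sq', ← Real.exp_add]; congr 1; ring
      rw [norm_one]
      calc (1:ℝ) = Real.exp (ε*x)^2 * Real.exp (-(2*ε)*x) := by
            rw [exp_sq', ← Real.exp_add, show 2*(ε*x) + -(2*ε)*x = 0 by ring, Real.exp_zero]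
        _ ≤ (Real.exp ((2+μ)*x) * u x)^2 * Real.exp (-(2*ε)*x) :=
            mul_le_mul_of_nonneg_right hp2 (Real.exp_pos _).le
        _ = u x^2 * Real.exp (2*((2+μ)-ε)*x) := by
            rw [mul_pow, mul_right_comm, hw1]; ring
    rcases (integrableOn_const_iff (C := (1:ℝ))).mp hone with h | h
    · simp at h
    · rw [Real.volume_Ioi] at h; exact lt_irrefl _ h
  -- conclusion
  have hv_tendsto : Tendsto (fun r => Real.exp ((2+μ)*r) * u r) atTop (𝓝 L) := by
    have := hvtil_tendsto
    simp only [hC0, zero_div, zero_mul, sub_zero] at this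
    exact this
  refine ⟨L, hv_tendsto, ?_⟩
  rintro δ' ⟨hδ'0, hδ'δ⟩
  have hdiff : ∀ r : ℝ, 0 ≤ r →
      |Real.exp ((2+μ)*r) * u r - L| ≤ K/δ * Real.exp (-δ*r) := by
    intro r hr
    have hI := integral_Ioi_of_hasDerivAt_of_tendsto'
      (fun x hx => hvtil' x (le_trans hr hx)) (hq_int.mono_set (Ioi_subset_Ioi hr))
      hvtil_tendsto
    have hb1 : |Real.exp ((2+μ)*r) * u r - C/(2*μ)*Real.exp ((2*μ)*r) - L| ≤
        K/δ * Real.exp (-δ*r) := by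
      rw [show Real.exp ((2+μ)*r) * u r - C/(2*μ)*Real.exp ((2*μ)*r) - L =
        -(L - (Real.exp ((2+μ)*r) * u r - C/(2*μ)*Real.exp ((2*μ)*r))) by ring, abs_neg, ← hI]
      have hni := norm_integral_le_integral_norm (μ := volume.restrict (Set.Ioi r))
        (fun x => Real.exp ((2+μ)*x) * (u' x + (2+μ)*u x) - C * Real.exp ((2*μ)*x))
      calc |∫ x in Set.Ioi r,
            (Real.exp ((2+μ)*x) * (u' x + (2+μ)*u x) - C * Real.exp ((2*μ)*x))|
          ≤ ∫ x in Set.Ioi r,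
            ‖Real.exp ((2+μ)*x) * (u' x + (2+μ)*u x) - C * Real.exp ((2*μ)*x)‖ := hni
        _ ≤ ∫ x in Set.Ioi r, K * Real.exp (-δ*x) := by
            refine integral_mono_of_nonneg (ae_of_all _ fun s => norm_nonneg _)
              ((exp_neg_integrableOn_Ioi r hδ0).const_mul K)
              ((ae_restrict_iff' measurableSet_Ioi).2 (ae_of_all _ fun x hx => ?_))
            simpa [Real.norm_eq_abs] using hq_bound x (le_trans hr (le_of_lt hx))
        _ = K * (Real.exp (-δ*r)/δ) := by rw [integral_const_mul, aux_integral_exp_Ioi hδ0]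
        _ = K/δ * Real.exp (-δ*r) := by ring
    simpa [hC0] using hb1
  have h2d : (0:ℝ) < 2*(δ - δ') := by linarith
  refine ((exp_neg_integrableOn_Ioi 0 h2d).const_mul ((K/δ)^2)).mono' ?_ ?_
  · exact ((((hu_cont.sub ((continuous_const.mul (hexp_cont (-(2+μ)))).continuousOn)).pow 2).mul
      (hexp_cont (2*((2+μ)+δ'))).continuousOn).mono Ioi_subset_Ici_self).aestronglyMeasurable
      measurableSet_Ioi
  · rw [ae_restrict_iff' measurableSet_Ioi]
    refine ae_of_all _ fun x hx => ?_
    have hxpos : (0:ℝ) ≤ x := le_of_lt hx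
    have hd := hdiff x hxpos
    have hne : Real.exp (-(2+μ)*x) * Real.exp ((2+μ)*x) = 1 := by
      rw [← Real.exp_add]; rw [show -(2+μ)*x + (2+μ)*x = 0 by ring, Real.exp_zero]
    have hkey : u x - L * Real.exp (-(2+μ)*x) =
        Real.exp (-(2+μ)*x) * (Real.exp ((2+μ)*x) * u x - L) := by
      linear_combination (-(u x)) * hne
    have hw2 : (Real.exp (-(2+μ)*x))^2 * Real.exp (2*((2+μ)+δ')*x) = Real.exp (2*δ'*x) := by
      rw [exp_sq', ← Real.exp_add]; congr 1; ring
    have hw3 : (Real.exp (-δ*x))^2 * Real.exp (2*δ'*x) = Real.exp (-(2*(δ-δ'))*x) := by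
      rw [exp_sq', ← Real.exp_add]; congr 1; ring
    rw [Real.norm_eq_abs, abs_of_nonneg (by positivity)]
    calc (u x - L * Real.exp (-(2+μ)*x))^2 * Real.exp (2*((2+μ)+δ')*x)
        = (Real.exp ((2+μ)*x) * u x - L)^2 *
          ((Real.exp (-(2+μ)*x))^2 * Real.exp (2*((2+μ)+δ')*x)) := by
          rw [hkey, mul_pow]; ring
      _ = (Real.exp ((2+μ)*x) * u x - L)^2 * Real.exp (2*δ'*x) := by rw [hw2]
      _ ≤ (K/δ * Real.exp (-δ*x))^2 * Real.exp (2*δ'*x) := by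
          refine mul_le_mul_of_nonneg_right ?_ (Real.exp_pos _).le
          rw [← sq_abs (Real.exp ((2+μ)*x) * u x - L)]
          exact pow_le_pow_left₀ (abs_nonneg _) hd 2
      _ = (K/δ)^2 * Real.exp (-(2*(δ-δ'))*x) := by
          rw [mul_pow, mul_assoc, hw3]
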